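/- (Graphon version of the intermediate regularity lemma) For every ε > 0 and every graphon W : [0,1]² → [0,1], there exists a measurable partition P of [0,1] into m ≤ 16^{2^{1/ε²}}/4 parts such that ‖W − W_P‖_{□Q} ≤ ε for every partition Q of [0,1] into at most m classes. -/

import Mathlib

open MeasureTheory Set

noncomputable section

abbrev I01 : Set ℝ := Set.Icc 0 1

def IsKernel (W : ℝ → ℝ → ℝ) : Prop :=
  Measurable (Function.uncurry W) ∧ ∃ C, ∀ x y, |W x y| ≤ C

def IsPartition {ι : Type*} [Fintype ι] (P : ι → Set ℝ) : Prop :=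
  (∀ i, MeasurableSet (P i)) ∧ (∀ i, P i ⊆ I01) ∧
  (Pairwise fun i j => Disjoint (P i) (P j)) ∧ (⋃ i, P i) = I01

def cutNorm (W : ℝ → ℝ → ℝ) : ℝ :=
  sSup { r | ∃ S T : Set ℝ, MeasurableSet S ∧ MeasurableSet T ∧ S ⊆ I01 ∧ T ⊆ I01 ∧
    r = |∫ x in S, ∫ y in T, W x y| }

def cutPNorm {ι : Type*} [Fintype ι] (P : ι → Set ℝ) (W : ℝ → ℝ → ℝ) : ℝ :=
  sSup { r | ∃ S T : ι → Set ℝ,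
    (∀ i, MeasurableSet (S i) ∧ MeasurableSet (T i) ∧ S i ⊆ P i ∧ T i ⊆ P i) ∧
    r = ∑ i, ∑ j, |∫ x in S i, ∫ y in T j, W x y| }

def l1Norm (W : ℝ → ℝ → ℝ) : ℝ := ∫ x in I01, ∫ y in I01, |W x y|

def l2sq (W : ℝ → ℝ → ℝ) : ℝ := ∫ x in I01, ∫ y in I01, (W x y)^2

def avgP {ι : Type*} [Fintype ι] (P : ι → Set ℝ) (W : ℝ → ℝ → ℝ) : ℝ → ℝ → ℝ :=
  fun x y => ∑ i, ∑ j, (P i).indicator (fun _ => (1:ℝ)) x * (P j).indicator (fun _ => (1:ℝ)) y *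
    ((∫ u in P i, ∫ v in P j, W u v) / (volume (P i)).toReal / (volume (P j)).toReal)


namespace IRG


def vr (A : Set ℝ) : ℝ := (volume A).toReal

lemma vol_le_one {A : Set ℝ} (hA : A ⊆ I01) : volume A ≤ 1 := by
  calc volume A ≤ volume I01 := measure_mono hA
  _ = 1 := by simp [Real.volume_Icc]

lemma vol_lt_top {A : Set ℝ} (hA : A ⊆ I01) : volume A < ⊤ :=
  lt_of_le_of_lt (vol_le_one hA) (by norm_num)

lemma vr_nonneg (A : Set ℝ) : 0 ≤ vr A := ENNReal.toReal_nonneg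

lemma vr_le_one {A : Set ℝ} (hA : A ⊆ I01) : vr A ≤ 1 := by
  have := vol_le_one hA
  simpa [vr] using ENNReal.toReal_le_of_le_ofReal (by norm_num) (by simpa using this)

lemma vr_I01 : vr I01 = 1 := by simp [vr, Real.volume_Icc]

lemma vr_eq_zero {A : Set ℝ} (hA : A ⊆ I01) (h : vr A = 0) : volume A = 0 := by
  have := vol_lt_top hA
  exact (ENNReal.toReal_eq_zero_iff _).mp h |>.resolve_right (by exact this.ne)

variable {W : ℝ → ℝ → ℝ}

section basics
variable (hmeas : Measurable (Function.uncurry W)) (hb : ∀ x y, |W x y| ≤ 1)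

include hmeas in
lemma measW_left (x : ℝ) : Measurable (W x) := hmeas.of_uncurry_left

include hmeas hb in
lemma intOn_W (x : ℝ) {B : Set ℝ} (hB : B ⊆ I01) : IntegrableOn (W x) B := by
  haveI : IsFiniteMeasure (volume.restrict B) :=
    ⟨by rw [Measure.restrict_apply_univ]; exact vol_lt_top hB⟩
  exact ⟨(measW_left hmeas x).aestronglyMeasurable,
    HasFiniteIntegral.of_bounded (C := 1) (Filter.Eventually.of_forall fun y => by
      simpa using hb x y)⟩

include hmeas in
lemma meas_inn (B : Set ℝ) : Measurable fun x => ∫ y in B, W x y :=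
  (hmeas.stronglyMeasurable.integral_prod_right (ν := volume.restrict B)).measurable

include hmeas hb in
lemma abs_inn_le {B : Set ℝ} (hB : B ⊆ I01) (x : ℝ) : |∫ y in B, W x y| ≤ vr B := by
  have h := norm_setIntegral_le_of_norm_le_const (f := W x) (C := 1) (vol_lt_top hB)
    (fun y _ => by simpa using hb x y)
  simpa [vr, measureReal_def] using h

include hmeas hb in
lemma intOn_inn {A B : Set ℝ} (hA : A ⊆ I01) (hB : B ⊆ I01) :
    IntegrableOn (fun x => ∫ y in B, W x y) A := by
  haveI : IsFiniteMeasure (volume.restrict A) :=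
    ⟨by rw [Measure.restrict_apply_univ]; exact vol_lt_top hA⟩
  exact ⟨(meas_inn hmeas B).aestronglyMeasurable,
    HasFiniteIntegral.of_bounded (C := 1) (Filter.Eventually.of_forall fun x => by
      have := abs_inn_le hmeas hb hB x
      have h1 := vr_le_one hB
      simp only [Real.norm_eq_abs]; linarith)⟩

end basics

def ee (W : ℝ → ℝ → ℝ) (A B : Set ℝ) : ℝ := ∫ x in A, ∫ y in B, W x y

def xb (W : ℝ → ℝ → ℝ) (A B : Set ℝ) : ℝ := ee W A B / vr A / vr B

section ee
variable (hmeas : Measurable (Function.uncurry W)) (hb : ∀ x y, |W x y| ≤ 1)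

include hmeas hb in
lemma abs_ee_le {A B : Set ℝ} (hA : A ⊆ I01) (hB : B ⊆ I01) :
    |ee W A B| ≤ vr A * vr B := by
  have h := norm_setIntegral_le_of_norm_le_const (μ := volume) (f := fun x => ∫ y in B, W x y) (C := vr B) (vol_lt_top hA)
    (fun x _ => by simpa using abs_inn_le hmeas hb hB x)
  rw [ee]
  calc |∫ x in A, ∫ y in B, W x y| ≤ vr B * (volume A).toReal := h
  _ = vr A * vr B := by unfold vr; ring

lemma ee_zero_left {A B : Set ℝ} (h : volume A = 0) : ee W A B = 0 := by
  rw [ee, Measure.restrict_eq_zero.mpr h, integral_zero_measure]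

lemma ee_zero_right {A B : Set ℝ} (h : volume B = 0) : ee W A B = 0 := by
  rw [ee]
  have : ∀ x, (∫ y in B, W x y) = 0 := fun x => by
    rw [Measure.restrict_eq_zero.mpr h, integral_zero_measure]
  simp [this]

include hmeas hb in
lemma abs_xb_le {A B : Set ℝ} (hA : A ⊆ I01) (hB : B ⊆ I01) : |xb W A B| ≤ 1 := by
  rw [xb]
  rcases eq_or_lt_of_le (vr_nonneg A) with h | h
  · simp [← h]
  rcases eq_or_lt_of_le (vr_nonneg B) with h' | h'
  · simp [← h']
  rw [abs_div, abs_div, abs_of_pos h, abs_of_pos h', div_div]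
  have := abs_ee_le hmeas hb hA hB
  apply div_le_one_of_le₀ this (by positivity)

omit hmeas hb in
lemma mul_xb {A B : Set ℝ} (hA : A ⊆ I01) (hB : B ⊆ I01) :
    vr A * vr B * xb W A B = ee W A B := by
  rw [xb]
  rcases eq_or_lt_of_le (vr_nonneg A) with h | h
  · rw [← h]; simp [ee_zero_left (W := W) (B := B) (vr_eq_zero hA h.symm)]
  rcases eq_or_lt_of_le (vr_nonneg B) with h' | h'
  · rw [← h']; simp [ee_zero_right (W := W) (A := A) (vr_eq_zero hB h'.symm)]
  field_simp

include hmeas hb in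
lemma ee_iUnion {κ κ' : Type*} [Fintype κ] [Fintype κ'] {A : κ → Set ℝ} {B : κ' → Set ℝ}
    (hAm : ∀ k, MeasurableSet (A k)) (hBm : ∀ l, MeasurableSet (B l))
    (hAs : ∀ k, A k ⊆ I01) (hBs : ∀ l, B l ⊆ I01)
    (hAd : Pairwise (Function.onFun Disjoint A)) (hBd : Pairwise (Function.onFun Disjoint B)) :
    ee W (⋃ k, A k) (⋃ l, B l) = ∑ k, ∑ l, ee W (A k) (B l) := by
  have hAu : (⋃ k, A k) ⊆ I01 := iUnion_subset hAs
  have hBu : (⋃ l, B l) ⊆ I01 := iUnion_subset hBs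
  have inner_eq : ∀ x, (∫ y in ⋃ l, B l, W x y) = ∑ l, ∫ y in B l, W x y := fun x => by
    rw [integral_iUnion hBm hBd (intOn_W hmeas hb x hBu), tsum_fintype]
  rw [ee, integral_iUnion hAm hAd (intOn_inn hmeas hb hAu hBu), tsum_fintype]
  refine Finset.sum_congr rfl fun k _ => ?_
  rw [setIntegral_congr_fun (hAm k) (fun x _ => inner_eq x),
    integral_finset_sum _ (fun l _ => intOn_inn hmeas hb (hAs k) (hBs l))]
  rfl

end ee

section avg
variable (hmeas : Measurable (Function.uncurry W)) (hb : ∀ x y, |W x y| ≤ 1)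
variable {ι : Type*} [Fintype ι] {P : ι → Set ℝ} (hP : IsPartition P)

omit [Fintype ι] in
lemma indicator_term_eq (a c : ℝ) (j : ι) :
    (fun y => a * (P j).indicator (fun _ => (1:ℝ)) y * c)
      = fun y => (P j).indicator (fun _ => a * c) y := by
  funext y
  by_cases hy : y ∈ P j <;> simp [indicator, hy]

omit [Fintype ι] in
lemma intOn_indicator_term {B : Set ℝ} (hB : B ⊆ I01) (a c : ℝ) (j : ι)
    (hPj : MeasurableSet (P j)) :
    IntegrableOn (fun y => a * (P j).indicator (fun _ => (1:ℝ)) y * c) B := by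
  rw [indicator_term_eq]
  exact (integrableOn_const (vol_lt_top hB).ne).indicator hPj

omit [Fintype ι] in
lemma int_indicator_term {B : Set ℝ} (hBm : MeasurableSet B) (a c : ℝ) (j : ι)
    (hPj : MeasurableSet (P j)) :
    ∫ y in B, a * (P j).indicator (fun _ => (1:ℝ)) y * c
      = vr (B ∩ P j) * (a * c) := by
  rw [indicator_term_eq, setIntegral_indicator hPj, setIntegral_const, vr, smul_eq_mul, measureReal_def]

lemma avgP_repr : avgP P W = fun x y => ∑ i, ∑ j,
    (P i).indicator (fun _ => (1:ℝ)) x * (P j).indicator (fun _ => (1:ℝ)) y *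
      xb W (P i) (P j) := rfl

include hP in
lemma inner_avg {B : Set ℝ} (hBm : MeasurableSet B) (hB : B ⊆ I01) (x : ℝ) :
    (∫ y in B, avgP P W x y) = ∑ i, ∑ j,
      (P i).indicator (fun _ => (1:ℝ)) x * (vr (B ∩ P j) * xb W (P i) (P j)) := by
  rw [avgP_repr]
  rw [integral_finset_sum _ (fun i _ => integrable_finset_sum _ (fun j _ =>
    intOn_indicator_term hB _ _ j (hP.1 j)))]
  refine Finset.sum_congr rfl fun i _ => ?_
  rw [integral_finset_sum _ (fun j _ => intOn_indicator_term hB _ _ j (hP.1 j))]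
  refine Finset.sum_congr rfl fun j _ => ?_
  rw [int_indicator_term hBm _ _ j (hP.1 j)]
  ring

include hP in
lemma int_avg {A B : Set ℝ} (hAm : MeasurableSet A) (hBm : MeasurableSet B)
    (hA : A ⊆ I01) (hB : B ⊆ I01) :
    (∫ x in A, ∫ y in B, avgP P W x y)
      = ∑ i, ∑ j, vr (A ∩ P i) * vr (B ∩ P j) * xb W (P i) (P j) := by
  rw [setIntegral_congr_fun hAm (fun x _ => inner_avg hP hBm hB x)]
  rw [integral_finset_sum _ (fun i _ => integrable_finset_sum _ (fun j _ => by
    have := intOn_indicator_term (P := P) hA 1 (vr (B ∩ P j) * xb W (P i) (P j)) i (hP.1 i)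
    simpa [IntegrableOn] using this))]
  refine Finset.sum_congr rfl fun i _ => ?_
  rw [integral_finset_sum _ (fun j _ => by
    have := intOn_indicator_term (P := P) hA 1 (vr (B ∩ P j) * xb W (P i) (P j)) i (hP.1 i)
    simpa [IntegrableOn] using this)]
  refine Finset.sum_congr rfl fun j _ => ?_
  have := int_indicator_term (P := P) hAm 1 (vr (B ∩ P j) * xb W (P i) (P j)) i (hP.1 i)
  simp only [one_mul] at this
  calc (∫ x in A, (P i).indicator (fun _ => (1:ℝ)) x * (vr (B ∩ P j) * xb W (P i) (P j)))
      = ∫ x in A, 1 * (P i).indicator (fun _ => (1:ℝ)) x * (vr (B ∩ P j) * xb W (P i) (P j)) := by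
        refine setIntegral_congr_fun hAm (fun x _ => by ring)
    _ = vr (A ∩ P i) * (vr (B ∩ P j) * xb W (P i) (P j)) := by
        rw [int_indicator_term (P := P) hAm 1 (vr (B ∩ P j) * xb W (P i) (P j)) i (hP.1 i)]
        ring
    _ = vr (A ∩ P i) * vr (B ∩ P j) * xb W (P i) (P j) := by ring

include hP in
lemma intOn_avg_right {B : Set ℝ} (hB : B ⊆ I01) (x : ℝ) :
    IntegrableOn (fun y => avgP P W x y) B := by
  rw [avgP_repr]
  exact integrable_finset_sum _ (fun i _ => integrable_finset_sum _ (fun j _ =>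
    intOn_indicator_term hB _ _ j (hP.1 j)))

include hP hmeas hb in
lemma intOn_inner_avg {A B : Set ℝ} (hBm : MeasurableSet B) (hA : A ⊆ I01) (hB : B ⊆ I01) :
    IntegrableOn (fun x => ∫ y in B, avgP P W x y) A := by
  have : (fun x => ∫ y in B, avgP P W x y) = fun x => ∑ i, ∑ j,
      (P i).indicator (fun _ => (1:ℝ)) x * (vr (B ∩ P j) * xb W (P i) (P j)) := by
    funext x; exact inner_avg hP hBm hB x
  rw [this]
  refine integrable_finset_sum _ (fun i _ => integrable_finset_sum _ (fun j _ => ?_))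
  have := intOn_indicator_term (P := P) hA 1 (vr (B ∩ P j) * xb W (P i) (P j)) i (hP.1 i)
  simpa [IntegrableOn] using this

include hP hmeas hb in
lemma int_sub {A B : Set ℝ} (hAm : MeasurableSet A) (hBm : MeasurableSet B)
    (hA : A ⊆ I01) (hB : B ⊆ I01) :
    (∫ x in A, ∫ y in B, (W x y - avgP P W x y))
      = ee W A B - ∫ x in A, ∫ y in B, avgP P W x y := by
  have inner : ∀ x, (∫ y in B, (W x y - avgP P W x y))
      = (∫ y in B, W x y) - ∫ y in B, avgP P W x y := fun x =>
    integral_sub (intOn_W hmeas hb x hB) (intOn_avg_right hP hB x)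
  rw [setIntegral_congr_fun hAm (fun x _ => inner x)]
  rw [integral_sub (intOn_inn hmeas hb hA hB) (intOn_inner_avg hmeas hb hP hBm hA hB)]
  rfl

end avg

section alg
variable {ι ρ : Type*} [Fintype ι] [Fintype ρ]

lemma alg (ε : ℝ) (hε : 0 < ε)
    (w : ι × ρ → ℝ) (hw : ∀ p, 0 ≤ w p) (htot : ∑ p, w p = 1)
    (w' : ι → ℝ) (hw' : ∀ i, w' i = ∑ r : ρ, w (i, r))
    (x : ι × ρ → ι × ρ → ℝ) (y : ι → ι → ℝ)
    (hcons : ∀ i j, w' i * w' j * y i j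
      = ∑ r : ρ, ∑ s : ρ, w (i, r) * w (j, s) * x (i, r) (j, s))
    (c : ι × ρ → ι × ρ → ℝ) (hc : ∀ p q, |c p q| ≤ 1)
    (hlb : ε < ∑ p : ι × ρ, ∑ q : ι × ρ, c p q * (w p * w q * (x p q - y p.1 q.1))) :
    (∑ i, ∑ j, w' i * w' j * y i j ^ 2) + ε ^ 2
      < ∑ p : ι × ρ, ∑ q : ι × ρ, w p * w q * x p q ^ 2 := by
  classical
  set D : ℝ := ∑ p : ι × ρ, ∑ q : ι × ρ, w p * w q * (x p q - y p.1 q.1) ^ 2 with hD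
  -- Cauchy-Schwarz part
  have hCS := Finset.sum_mul_sq_le_sq_mul_sq Finset.univ
    (fun z : (ι × ρ) × (ι × ρ) => c z.1 z.2 * Real.sqrt (w z.1 * w z.2))
    (fun z : (ι × ρ) × (ι × ρ) => Real.sqrt (w z.1 * w z.2) * (x z.1 z.2 - y z.1.1 z.2.1))
  have h1 : (∑ z : (ι × ρ) × (ι × ρ), (c z.1 z.2 * Real.sqrt (w z.1 * w z.2)) *
        (Real.sqrt (w z.1 * w z.2) * (x z.1 z.2 - y z.1.1 z.2.1)))
      = ∑ p : ι × ρ, ∑ q : ι × ρ, c p q * (w p * w q * (x p q - y p.1 q.1)) := by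
    rw [Fintype.sum_prod_type]
    refine Finset.sum_congr rfl fun p _ => Finset.sum_congr rfl fun q _ => ?_
    have hs : Real.sqrt (w p * w q) * Real.sqrt (w p * w q) = w p * w q :=
      Real.mul_self_sqrt (mul_nonneg (hw p) (hw q))
    linear_combination c p q * (x p q - y p.1 q.1) * hs
  have hF2 : (∑ z : (ι × ρ) × (ι × ρ), (c z.1 z.2 * Real.sqrt (w z.1 * w z.2)) ^ 2) ≤ 1 := by
    have hle : ∀ z : (ι × ρ) × (ι × ρ), (c z.1 z.2 * Real.sqrt (w z.1 * w z.2)) ^ 2 ≤ w z.1 * w z.2 := by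
      intro z
      have hs : Real.sqrt (w z.1 * w z.2) ^ 2 = w z.1 * w z.2 :=
        Real.sq_sqrt (mul_nonneg (hw z.1) (hw z.2))
      have hc2 : c z.1 z.2 ^ 2 ≤ 1 := by
        have h := abs_le.mp (hc z.1 z.2)
        nlinarith [h.1, h.2]
      calc (c z.1 z.2 * Real.sqrt (w z.1 * w z.2)) ^ 2
          = c z.1 z.2 ^ 2 * Real.sqrt (w z.1 * w z.2) ^ 2 := by ring
        _ ≤ 1 * (w z.1 * w z.2) := by
            rw [hs]
            exact mul_le_mul_of_nonneg_right hc2 (mul_nonneg (hw z.1) (hw z.2))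
        _ = w z.1 * w z.2 := one_mul _
    calc (∑ z : (ι × ρ) × (ι × ρ), (c z.1 z.2 * Real.sqrt (w z.1 * w z.2)) ^ 2)
        ≤ ∑ z : (ι × ρ) × (ι × ρ), w z.1 * w z.2 := Finset.sum_le_sum fun z _ => hle z
      _ = (∑ p : ι × ρ, w p) * (∑ q : ι × ρ, w q) := by
          rw [Finset.sum_mul_sum, Fintype.sum_prod_type]
      _ = 1 := by rw [htot]; ring
  have hG2 : (∑ z : (ι × ρ) × (ι × ρ), (Real.sqrt (w z.1 * w z.2) * (x z.1 z.2 - y z.1.1 z.2.1)) ^ 2)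
      = D := by
    rw [hD, Fintype.sum_prod_type]
    refine Finset.sum_congr rfl fun p _ => Finset.sum_congr rfl fun q _ => ?_
    have hs : Real.sqrt (w p * w q) ^ 2 = w p * w q :=
      Real.sq_sqrt (mul_nonneg (hw p) (hw q))
    linear_combination (x p q - y p.1 q.1) ^ 2 * hs
  have hDnn : 0 ≤ D := by
    rw [hD]
    refine Finset.sum_nonneg fun p _ => Finset.sum_nonneg fun q _ => ?_
    exact mul_nonneg (mul_nonneg (hw p) (hw q)) (sq_nonneg _)
  have hεD : ε ^ 2 < D := by
    have hlt : ε < ∑ z : (ι × ρ) × (ι × ρ), (c z.1 z.2 * Real.sqrt (w z.1 * w z.2)) *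
        (Real.sqrt (w z.1 * w z.2) * (x z.1 z.2 - y z.1.1 z.2.1)) := by rw [h1]; exact hlb
    have h2 : ε ^ 2 < (∑ z : (ι × ρ) × (ι × ρ), (c z.1 z.2 * Real.sqrt (w z.1 * w z.2)) *
        (Real.sqrt (w z.1 * w z.2) * (x z.1 z.2 - y z.1.1 z.2.1))) ^ 2 :=
      pow_lt_pow_left₀ hlt hε.le (by norm_num)
    calc ε ^ 2 < _ := h2
      _ ≤ _ * _ := hCS
      _ ≤ 1 * D := by
          rw [hG2]
          exact mul_le_mul_of_nonneg_right hF2 hDnn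
      _ = D := one_mul D
  -- Pythagoras part
  have expand : D = (∑ p : ι × ρ, ∑ q : ι × ρ, w p * w q * x p q ^ 2)
      - 2 * (∑ p : ι × ρ, ∑ q : ι × ρ, w p * w q * x p q * y p.1 q.1)
      + (∑ p : ι × ρ, ∑ q : ι × ρ, w p * w q * y p.1 q.1 ^ 2) := by
    rw [hD]
    have hterm : ∀ p q : ι × ρ, w p * w q * (x p q - y p.1 q.1) ^ 2
        = w p * w q * x p q ^ 2 - 2 * (w p * w q * x p q * y p.1 q.1)
          + w p * w q * y p.1 q.1 ^ 2 := fun p q => by ring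
    simp_rw [hterm, Finset.sum_add_distrib, Finset.sum_sub_distrib, ← Finset.mul_sum]
  have mid : (∑ p : ι × ρ, ∑ q : ι × ρ, w p * w q * x p q * y p.1 q.1)
      = ∑ i, ∑ j, w' i * w' j * y i j ^ 2 := by
    rw [Fintype.sum_prod_type]
    simp_rw [Fintype.sum_prod_type]
    refine Finset.sum_congr rfl fun i _ => ?_
    rw [Finset.sum_comm]
    refine Finset.sum_congr rfl fun j _ => ?_
    have hpull : (∑ r : ρ, ∑ s : ρ, w (i, r) * w (j, s) * x (i, r) (j, s) * y i j)
        = (∑ r : ρ, ∑ s : ρ, w (i, r) * w (j, s) * x (i, r) (j, s)) * y i j := by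
      rw [Finset.sum_mul]
      exact Finset.sum_congr rfl fun r _ => by rw [Finset.sum_mul]
    rw [hpull, ← hcons i j]
    ring
  have third : (∑ p : ι × ρ, ∑ q : ι × ρ, w p * w q * y p.1 q.1 ^ 2)
      = ∑ i, ∑ j, w' i * w' j * y i j ^ 2 := by
    rw [Fintype.sum_prod_type]
    simp_rw [Fintype.sum_prod_type]
    refine Finset.sum_congr rfl fun i _ => ?_
    rw [Finset.sum_comm]
    refine Finset.sum_congr rfl fun j _ => ?_
    have : (∑ r : ρ, ∑ s : ρ, w (i, r) * w (j, s) * y i j ^ 2)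
        = (∑ r : ρ, w (i, r)) * (∑ s : ρ, w (j, s)) * y i j ^ 2 := by
      rw [Finset.sum_mul_sum, Finset.sum_mul]
      exact Finset.sum_congr rfl fun r _ => by rw [Finset.sum_mul]
    rw [this, ← hw' i, ← hw' j]
  rw [expand, mid, third] at hεD
  linarith

end alg

def En (W : ℝ → ℝ → ℝ) {ι : Type*} [Fintype ι] (P : ι → Set ℝ) : ℝ :=
  ∑ i, ∑ j, vr (P i) * vr (P j) * xb W (P i) (P j) ^ 2

lemma vr_iUnion {κ : Type*} [Fintype κ] {A : κ → Set ℝ} (hm : ∀ k, MeasurableSet (A k))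
    (hd : Pairwise (Function.onFun Disjoint A)) (hs : ∀ k, A k ⊆ I01) :
    vr (⋃ k, A k) = ∑ k, vr (A k) := by
  rw [vr, measure_iUnion hd hm, tsum_fintype,
    ENNReal.toReal_sum (fun k _ => (vol_lt_top (hs k)).ne)]
  rfl

lemma sum_vr_eq_one {ι : Type*} [Fintype ι] {P : ι → Set ℝ} (hP : IsPartition P) :
    ∑ i, vr (P i) = 1 := by
  rw [← vr_iUnion hP.1 hP.2.2.1 hP.2.1, hP.2.2.2, vr_I01]

lemma En_nonneg (W : ℝ → ℝ → ℝ) {ι : Type*} [Fintype ι] (P : ι → Set ℝ) : 0 ≤ En W P :=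
  Finset.sum_nonneg fun i _ => Finset.sum_nonneg fun j _ =>
    mul_nonneg (mul_nonneg (vr_nonneg _) (vr_nonneg _)) (sq_nonneg _)

lemma En_le_one (hmeas : Measurable (Function.uncurry W)) (hb : ∀ x y, |W x y| ≤ 1)
    {ι : Type*} [Fintype ι] {P : ι → Set ℝ} (hP : IsPartition P) : En W P ≤ 1 := by
  have hsum := sum_vr_eq_one hP
  calc En W P ≤ ∑ i, ∑ j, vr (P i) * vr (P j) := by
        refine Finset.sum_le_sum fun i _ => Finset.sum_le_sum fun j _ => ?_
        have h1 : xb W (P i) (P j) ^ 2 ≤ 1 := by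
          have := abs_xb_le hmeas hb (hP.2.1 i) (hP.2.1 j)
          have h := abs_le.mp this
          nlinarith [h.1, h.2]
        calc vr (P i) * vr (P j) * xb W (P i) (P j) ^ 2
            ≤ vr (P i) * vr (P j) * 1 := by
              exact mul_le_mul_of_nonneg_left h1 (mul_nonneg (vr_nonneg _) (vr_nonneg _))
          _ = vr (P i) * vr (P j) := mul_one _
    _ = (∑ i, vr (P i)) * (∑ j, vr (P j)) := by rw [Finset.sum_mul_sum]
    _ = 1 := by rw [hsum]; ring

section refine
variable {ι κ : Type*} [Fintype ι] [Fintype κ]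

def RF (P : ι → Set ℝ) (Q S T : κ → Set ℝ) : ι × (κ × Bool × Bool) → Set ℝ :=
  fun p => P p.1 ∩ ((if p.2.2.1 then S p.2.1 else Q p.2.1 \ S p.2.1) ∩
    (if p.2.2.2 then T p.2.1 else Q p.2.1 \ T p.2.1))

variable {P : ι → Set ℝ} {Q S T : κ → Set ℝ}
variable (hP : IsPartition P) (hQ : IsPartition Q)
variable (hST : ∀ i, MeasurableSet (S i) ∧ MeasurableSet (T i) ∧ S i ⊆ Q i ∧ T i ⊆ Q i)

include hP hQ hST

omit hP hQ hST in
lemma RF_sub_P (p : ι × (κ × Bool × Bool)) : RF P Q S T p ⊆ P p.1 := inter_subset_left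

omit hP hQ hST in
include hST in
lemma RF_sub_Q (p : ι × (κ × Bool × Bool)) : RF P Q S T p ⊆ Q p.2.1 := by
  rcases p with ⟨i, j, b, c⟩
  refine inter_subset_right.trans (inter_subset_left.trans ?_)
  cases b
  · exact diff_subset
  · exact (hST j).2.2.1

omit hQ hST in
lemma RF_sub_I01 (p : ι × (κ × Bool × Bool)) : RF P Q S T p ⊆ I01 :=
  (RF_sub_P p).trans (hP.2.1 p.1)

omit hQ in
lemma RF_meas (p : ι × (κ × Bool × Bool)) (hQm : ∀ j, MeasurableSet (Q j)) :
    MeasurableSet (RF P Q S T p) := by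
  rcases p with ⟨i, j, b, c⟩
  refine (hP.1 i).inter (MeasurableSet.inter ?_ ?_)
  · cases b
    · exact (hQm j).diff (hST j).1
    · exact (hST j).1
  · cases b <;> cases c
    · exact (hQm j).diff (hST j).2.1
    · exact (hST j).2.1
    · exact (hQm j).diff (hST j).2.1
    · exact (hST j).2.1

lemma RF_fiber (i : ι) : (⋃ r : κ × Bool × Bool, RF P Q S T (i, r)) = P i ∩ I01 := by
  ext z
  simp only [mem_iUnion, Prod.exists, mem_inter_iff]
  constructor
  · rintro ⟨j, b, c, hz⟩
    exact ⟨hz.1, (hP.2.1 i) hz.1⟩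
  · rintro ⟨hzP, hzI⟩
    have : z ∈ ⋃ j, Q j := hQ.2.2.2 ▸ hzI
    obtain ⟨j, hj⟩ := mem_iUnion.mp this
    by_cases hs : z ∈ S j <;> by_cases ht : z ∈ T j
    · exact ⟨j, true, true, hzP, by simp [RF, hs, ht]⟩
    · exact ⟨j, true, false, hzP, by simp [RF, hs, ht, hj]⟩
    · exact ⟨j, false, true, hzP, by simp [RF, hs, ht, hj]⟩
    · exact ⟨j, false, false, hzP, by simp [RF, hs, ht, hj]⟩

lemma RF_fiber' (i : ι) : (⋃ r : κ × Bool × Bool, RF P Q S T (i, r)) = P i := by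
  rw [RF_fiber hP hQ hST i, inter_eq_self_of_subset_left (hP.2.1 i)]

lemma RF_disjoint : Pairwise (Function.onFun Disjoint (RF P Q S T)) := by
  rintro ⟨i, j, b, c⟩ ⟨i', j', b', c'⟩ hne
  by_cases hi : i = i'
  · subst hi
    by_cases hj : j = j'
    · subst hj
      have hbc : b ≠ b' ∨ c ≠ c' := by
        by_contra h
        push_neg at h
        exact hne (by rw [h.1, h.2])
      rcases hbc with hb | hc
      · have : Disjoint (if b then S j else Q j \ S j) (if b' then S j else Q j \ S j) := by
          rcases Bool.eq_false_or_eq_true b with rfl | rfl <;>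
            rcases Bool.eq_false_or_eq_true b' with rfl | rfl <;> simp_all
          · exact disjoint_sdiff_right
          · exact disjoint_sdiff_left
        exact this.mono (inter_subset_right.trans inter_subset_left)
          (inter_subset_right.trans inter_subset_left)
      · have : Disjoint (if c then T j else Q j \ T j) (if c' then T j else Q j \ T j) := by
          rcases Bool.eq_false_or_eq_true c with rfl | rfl <;>
            rcases Bool.eq_false_or_eq_true c' with rfl | rfl <;> simp_all
          · exact disjoint_sdiff_right
          · exact disjoint_sdiff_left
        exact this.mono (inter_subset_right.trans inter_subset_right)
          (inter_subset_right.trans inter_subset_right)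
    · exact (hQ.2.2.1 hj).mono (RF_sub_Q hST _) (RF_sub_Q hST _)
  · exact (hP.2.2.1 hi).mono (RF_sub_P _) (RF_sub_P _)

lemma RF_partition : IsPartition (RF P Q S T) := by
  refine ⟨fun p => RF_meas hP hST p hQ.1, fun p => RF_sub_I01 hP p,
    RF_disjoint hP hQ hST, ?_⟩
  have h1 : (⋃ p : ι × (κ × Bool × Bool), RF P Q S T p)
      = ⋃ i, ⋃ r : κ × Bool × Bool, RF P Q S T (i, r) := by
    ext z
    simp only [mem_iUnion, Prod.exists]
  rw [h1]
  have h2 : ∀ i, (⋃ r : κ × Bool × Bool, RF P Q S T (i, r)) = P i :=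
    fun i => RF_fiber' hP hQ hST i
  simp_rw [h2]
  exact hP.2.2.2

lemma RF_SP_inter (j0 : κ) (a : ι) :
    (⋃ c : Bool, RF P Q S T (a, (j0, true, c))) = S j0 ∩ P a := by
  ext z
  simp only [mem_iUnion, RF, if_true, mem_inter_iff]
  constructor
  · rintro ⟨c, hz⟩
    exact ⟨hz.2.1, hz.1⟩
  · rintro ⟨hS, hPa⟩
    have hQj : z ∈ Q j0 := (hST j0).2.2.1 hS
    by_cases ht : z ∈ T j0
    · exact ⟨true, hPa, hS, by simp [ht]⟩
    · exact ⟨false, hPa, hS, by simp [ht, hQj]⟩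

lemma RF_TP_inter (j0 : κ) (b : ι) :
    (⋃ d : Bool, RF P Q S T (b, (j0, d, true))) = T j0 ∩ P b := by
  ext z
  simp only [mem_iUnion, RF, if_true, mem_inter_iff]
  constructor
  · rintro ⟨d, hz⟩
    exact ⟨hz.2.2, hz.1⟩
  · rintro ⟨hT, hPb⟩
    have hQj : z ∈ Q j0 := (hST j0).2.2.2 hT
    by_cases hs : z ∈ S j0
    · exact ⟨true, hPb, by simp [hs], hT⟩
    · exact ⟨false, hPb, by simp [hs, hQj], hT⟩

lemma RF_S_fiber (j0 : κ) :
    (⋃ z : ι × Bool, RF P Q S T (z.1, (j0, true, z.2))) = S j0 := by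
  have h1 : (⋃ z : ι × Bool, RF P Q S T (z.1, (j0, true, z.2)))
      = ⋃ a : ι, ⋃ c : Bool, RF P Q S T (a, (j0, true, c)) := by
    ext z
    simp only [mem_iUnion, Prod.exists]
  rw [h1]
  have h2 : ∀ a, (⋃ c : Bool, RF P Q S T (a, (j0, true, c))) = S j0 ∩ P a :=
    fun a => RF_SP_inter hP hQ hST j0 a
  simp_rw [h2, ← inter_iUnion, hP.2.2.2,
    inter_eq_self_of_subset_left (((hST j0).2.2.1).trans (hQ.2.1 j0))]

lemma RF_T_fiber (j0 : κ) :
    (⋃ z : ι × Bool, RF P Q S T (z.1, (j0, z.2, true))) = T j0 := by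
  have h1 : (⋃ z : ι × Bool, RF P Q S T (z.1, (j0, z.2, true)))
      = ⋃ b : ι, ⋃ d : Bool, RF P Q S T (b, (j0, d, true)) := by
    ext z
    simp only [mem_iUnion, Prod.exists]
  rw [h1]
  have h2 : ∀ b, (⋃ d : Bool, RF P Q S T (b, (j0, d, true))) = T j0 ∩ P b :=
    fun b => RF_TP_inter hP hQ hST j0 b
  simp_rw [h2, ← inter_iUnion, hP.2.2.2,
    inter_eq_self_of_subset_left (((hST j0).2.2.2).trans (hQ.2.1 j0))]

end refine

section increment
variable (hmeas : Measurable (Function.uncurry W)) (hb : ∀ x y, |W x y| ≤ 1)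
variable {ι κ : Type*} [Fintype ι] [Fintype κ]
variable {P : ι → Set ℝ} {Q S T : κ → Set ℝ}
variable (hP : IsPartition P) (hQ : IsPartition Q)
variable (hST : ∀ i, MeasurableSet (S i) ∧ MeasurableSet (T i) ∧ S i ⊆ Q i ∧ T i ⊆ Q i)

include hmeas hb hP hQ hST in
lemma increment (sgn : κ → κ → ℝ) (hsgn : ∀ i j, |sgn i j| ≤ 1) (ε : ℝ) (hε : 0 < ε)
    (hlb : ε < ∑ i, ∑ j, sgn i j * ∫ x in S i, ∫ y in T j, (W x y - avgP P W x y)) :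
    En W P + ε ^ 2 < En W (RF P Q S T) := by
  classical
  have hR : IsPartition (RF P Q S T) := RF_partition hP hQ hST
  have hw : ∀ p : ι × (κ × Bool × Bool), (0:ℝ) ≤ vr (RF P Q S T p) := fun p => vr_nonneg _
  have htot : ∑ p : ι × (κ × Bool × Bool), vr (RF P Q S T p) = 1 := sum_vr_eq_one hR
  have hdisj_fiber : ∀ i : ι, Pairwise (Function.onFun Disjoint fun r : κ × Bool × Bool =>
      RF P Q S T (i, r)) := fun i r r' hrr =>
    RF_disjoint hP hQ hST (fun h => hrr ((Prod.mk.inj h).2))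
  have hw' : ∀ i, vr (P i) = ∑ r : κ × Bool × Bool, vr (RF P Q S T (i, r)) := by
    intro i
    rw [← RF_fiber' hP hQ hST i]
    exact vr_iUnion (fun r => RF_meas hP hST _ hQ.1) (hdisj_fiber i)
      (fun r => RF_sub_I01 hP _)
  have hcons : ∀ i j, vr (P i) * vr (P j) * xb W (P i) (P j)
      = ∑ r : κ × Bool × Bool, ∑ s : κ × Bool × Bool,
          vr (RF P Q S T (i, r)) * vr (RF P Q S T (j, s))
            * xb W (RF P Q S T (i, r)) (RF P Q S T (j, s)) := by
    intro i j
    rw [mul_xb (hP.2.1 i) (hP.2.1 j)]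
    conv_lhs => rw [← RF_fiber' hP hQ hST i, ← RF_fiber' hP hQ hST j]
    rw [ee_iUnion hmeas hb (A := fun r : κ × Bool × Bool => RF P Q S T (i, r))
      (B := fun s : κ × Bool × Bool => RF P Q S T (j, s))
      (fun r => RF_meas hP hST _ hQ.1) (fun s => RF_meas hP hST _ hQ.1)
      (fun r => RF_sub_I01 hP _) (fun s => RF_sub_I01 hP _)
      (hdisj_fiber i) (hdisj_fiber j)]
    exact Finset.sum_congr rfl fun r _ => Finset.sum_congr rfl fun s _ =>
      (mul_xb (RF_sub_I01 hP _) (RF_sub_I01 hP _)).symm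
  have hcc : ∀ p q : ι × (κ × Bool × Bool),
      |(if p.2.2.1 = true ∧ q.2.2.2 = true then sgn p.2.1 q.2.1 else 0)| ≤ 1 := by
    intro p q
    split_ifs with h
    · exact hsgn _ _
    · simp
  have hgw : ∀ p q : ι × (κ × Bool × Bool),
      vr (RF P Q S T p) * vr (RF P Q S T q)
        * (xb W (RF P Q S T p) (RF P Q S T q) - xb W (P p.1) (P q.1))
      = ee W (RF P Q S T p) (RF P Q S T q)
        - vr (RF P Q S T p) * vr (RF P Q S T q) * xb W (P p.1) (P q.1) := by
    intro p q
    have h1 := mul_xb (W := W) (RF_sub_I01 (Q := Q) (S := S) (T := T) hP p)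
      (RF_sub_I01 (Q := Q) (S := S) (T := T) hP q)
    linear_combination h1
  -- per (i,j) evaluation
  have hij : ∀ i j : κ, (∫ x in S i, ∫ y in T j, (W x y - avgP P W x y))
      = ∑ z1 : ι × Bool, ∑ z2 : ι × Bool,
          (ee W (RF P Q S T (z1.1, (i, true, z1.2))) (RF P Q S T (z2.1, (j, z2.2, true)))
            - vr (RF P Q S T (z1.1, (i, true, z1.2))) * vr (RF P Q S T (z2.1, (j, z2.2, true)))
              * xb W (P z1.1) (P z2.1)) := by
    intro i j
    have hSsub : S i ⊆ I01 := (hST i).2.2.1.trans (hQ.2.1 i)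
    have hTsub : T j ⊆ I01 := (hST j).2.2.2.trans (hQ.2.1 j)
    rw [int_sub hmeas hb hP (hST i).1 (hST j).2.1 hSsub hTsub]
    have hee : ee W (S i) (T j) = ∑ z1 : ι × Bool, ∑ z2 : ι × Bool,
        ee W (RF P Q S T (z1.1, (i, true, z1.2))) (RF P Q S T (z2.1, (j, z2.2, true))) := by
      conv_lhs => rw [← RF_S_fiber hP hQ hST i, ← RF_T_fiber hP hQ hST j]
      refine ee_iUnion hmeas hb
        (A := fun z1 : ι × Bool => RF P Q S T (z1.1, (i, true, z1.2)))
        (B := fun z2 : ι × Bool => RF P Q S T (z2.1, (j, z2.2, true)))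
        (fun z1 => RF_meas hP hST _ hQ.1) (fun z2 => RF_meas hP hST _ hQ.1)
        (fun z1 => RF_sub_I01 hP _) (fun z2 => RF_sub_I01 hP _) ?_ ?_
      · intro z1 z1' h1
        refine RF_disjoint hP hQ hST (fun h => h1 ?_)
        have ha := (Prod.mk.inj h).1
        have hbb := (Prod.mk.inj ((Prod.mk.inj h).2)).2
        exact Prod.ext ha ((Prod.mk.inj hbb).2)
      · intro z2 z2' h1
        refine RF_disjoint hP hQ hST (fun h => h1 ?_)
        have ha := (Prod.mk.inj h).1
        have hbb := (Prod.mk.inj ((Prod.mk.inj h).2)).2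
        exact Prod.ext ha ((Prod.mk.inj hbb).1)
    have hSa : ∀ a, vr (S i ∩ P a) = ∑ cb : Bool, vr (RF P Q S T (a, (i, true, cb))) := by
      intro a
      rw [← RF_SP_inter hP hQ hST i a]
      refine vr_iUnion (fun cb => RF_meas hP hST _ hQ.1) ?_ (fun cb => RF_sub_I01 hP _)
      intro cb cb' hne
      refine RF_disjoint hP hQ hST (fun h => hne ?_)
      have hbb := (Prod.mk.inj ((Prod.mk.inj ((Prod.mk.inj h).2)).2)).2
      exact hbb
    have hTb : ∀ b, vr (T j ∩ P b) = ∑ d : Bool, vr (RF P Q S T (b, (j, d, true))) := by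
      intro b
      rw [← RF_TP_inter hP hQ hST j b]
      refine vr_iUnion (fun d => RF_meas hP hST _ hQ.1) ?_ (fun d => RF_sub_I01 hP _)
      intro d d' hne
      refine RF_disjoint hP hQ hST (fun h => hne ?_)
      exact (Prod.mk.inj ((Prod.mk.inj ((Prod.mk.inj h).2)).2)).1
    have havg : (∫ x in S i, ∫ y in T j, avgP P W x y)
        = ∑ z1 : ι × Bool, ∑ z2 : ι × Bool,
            vr (RF P Q S T (z1.1, (i, true, z1.2))) * vr (RF P Q S T (z2.1, (j, z2.2, true)))
              * xb W (P z1.1) (P z2.1) := by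
      rw [int_avg hP (hST i).1 (hST j).2.1 hSsub hTsub]
      calc (∑ a, ∑ b, vr (S i ∩ P a) * vr (T j ∩ P b) * xb W (P a) (P b))
          = ∑ a, ∑ b, ∑ cb : Bool, ∑ d : Bool,
              vr (RF P Q S T (a, (i, true, cb))) * vr (RF P Q S T (b, (j, d, true)))
                * xb W (P a) (P b) := by
            refine Finset.sum_congr rfl fun a _ => Finset.sum_congr rfl fun b _ => ?_
            rw [hSa a, hTb b, Finset.sum_mul_sum, Finset.sum_mul]
            exact Finset.sum_congr rfl fun cb _ => by rw [Finset.sum_mul]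
        _ = ∑ z1 : ι × Bool, ∑ z2 : ι × Bool,
              vr (RF P Q S T (z1.1, (i, true, z1.2))) * vr (RF P Q S T (z2.1, (j, z2.2, true)))
                * xb W (P z1.1) (P z2.1) := by
            rw [Fintype.sum_prod_type]
            simp_rw [Fintype.sum_prod_type]
            exact Finset.sum_congr rfl fun a _ => Finset.sum_comm
    rw [hee, havg, ← Finset.sum_sub_distrib]
    refine Finset.sum_congr rfl fun z1 _ => ?_
    rw [← Finset.sum_sub_distrib]
  -- the global sum identity
  have hsum : (∑ p : ι × (κ × Bool × Bool), ∑ q : ι × (κ × Bool × Bool),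
        (if p.2.2.1 = true ∧ q.2.2.2 = true then sgn p.2.1 q.2.1 else 0) *
          (ee W (RF P Q S T p) (RF P Q S T q)
            - vr (RF P Q S T p) * vr (RF P Q S T q) * xb W (P p.1) (P q.1)))
      = ∑ i, ∑ j, sgn i j * ∫ x in S i, ∫ y in T j, (W x y - avgP P W x y) := by
    simp_rw [hij]
    calc (∑ p : ι × (κ × Bool × Bool), ∑ q : ι × (κ × Bool × Bool),
        (if p.2.2.1 = true ∧ q.2.2.2 = true then sgn p.2.1 q.2.1 else 0) *
          (ee W (RF P Q S T p) (RF P Q S T q)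
            - vr (RF P Q S T p) * vr (RF P Q S T q) * xb W (P p.1) (P q.1)))
        = ∑ z : (ι × (κ × Bool × Bool)) × (ι × (κ × Bool × Bool)),
            (if z.1.2.2.1 = true ∧ z.2.2.2.2 = true then sgn z.1.2.1 z.2.2.1 else 0) *
              (ee W (RF P Q S T z.1) (RF P Q S T z.2)
                - vr (RF P Q S T z.1) * vr (RF P Q S T z.2) * xb W (P z.1.1) (P z.2.1)) := by
          conv_rhs => rw [← Finset.univ_product_univ, Finset.sum_product]
      _ = ∑ z ∈ Finset.univ.filter
            (fun z : (ι × (κ × Bool × Bool)) × (ι × (κ × Bool × Bool)) =>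
              z.1.2.2.1 = true ∧ z.2.2.2.2 = true),
            (if z.1.2.2.1 = true ∧ z.2.2.2.2 = true then sgn z.1.2.1 z.2.2.1 else 0) *
              (ee W (RF P Q S T z.1) (RF P Q S T z.2)
                - vr (RF P Q S T z.1) * vr (RF P Q S T z.2) * xb W (P z.1.1) (P z.2.1)) := by
          refine (Finset.sum_filter_of_ne ?_).symm
          intro z _ hz
          by_contra hcond
          rw [if_neg hcond, zero_mul] at hz
          exact hz rfl
      _ = ∑ z : (κ × κ) × ((ι × Bool) × (ι × Bool)),
            sgn z.1.1 z.1.2 *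
              (ee W (RF P Q S T (z.2.1.1, (z.1.1, true, z.2.1.2)))
                  (RF P Q S T (z.2.2.1, (z.1.2, z.2.2.2, true)))
                - vr (RF P Q S T (z.2.1.1, (z.1.1, true, z.2.1.2)))
                  * vr (RF P Q S T (z.2.2.1, (z.1.2, z.2.2.2, true)))
                  * xb W (P z.2.1.1) (P z.2.2.1)) := by
          refine Finset.sum_nbij'
            (fun z => ((z.1.2.1, z.2.2.1), ((z.1.1, z.1.2.2.2), (z.2.1, z.2.2.2.1))))
            (fun z => ((z.2.1.1, (z.1.1, true, z.2.1.2)), (z.2.2.1, (z.1.2, z.2.2.2, true))))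
            (fun z _ => Finset.mem_univ _) ?_ ?_ (fun z _ => rfl) ?_
          · rintro ⟨⟨i0, j0⟩, ⟨⟨a, cb⟩, ⟨b, d⟩⟩⟩ _
            simp
          · rintro ⟨⟨a, i0, b1, c1⟩, ⟨b, j0, d1, e1⟩⟩ hmem
            simp only [Finset.mem_filter] at hmem
            obtain ⟨-, h1, h2⟩ := hmem
            subst h1; subst h2
            rfl
          · rintro ⟨⟨a, i0, b1, c1⟩, ⟨b, j0, d1, e1⟩⟩ hmem
            simp only [Finset.mem_filter] at hmem
            obtain ⟨-, h1, h2⟩ := hmem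
            subst h1; subst h2
            simp
      _ = ∑ i, ∑ j, sgn i j * (∑ z1 : ι × Bool, ∑ z2 : ι × Bool,
            (ee W (RF P Q S T (z1.1, (i, true, z1.2))) (RF P Q S T (z2.1, (j, z2.2, true)))
              - vr (RF P Q S T (z1.1, (i, true, z1.2)))
                * vr (RF P Q S T (z2.1, (j, z2.2, true)))
                * xb W (P z1.1) (P z2.1))) := by
          rw [Fintype.sum_prod_type]
          rw [Fintype.sum_prod_type]
          refine Finset.sum_congr rfl fun i _ => Finset.sum_congr rfl fun j _ => ?_
          rw [Finset.mul_sum]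
          rw [Fintype.sum_prod_type]
          refine Finset.sum_congr rfl fun z1 _ => ?_
          rw [Finset.mul_sum]
  have hlb' : ε < ∑ p : ι × (κ × Bool × Bool), ∑ q : ι × (κ × Bool × Bool),
      (if p.2.2.1 = true ∧ q.2.2.2 = true then sgn p.2.1 q.2.1 else 0) *
        (vr (RF P Q S T p) * vr (RF P Q S T q) *
          (xb W (RF P Q S T p) (RF P Q S T q) - xb W (P p.1) (P q.1))) := by
    simp_rw [hgw]
    rw [hsum]
    exact hlb
  have halg := alg ε hε (fun p => vr (RF P Q S T p)) hw htot (fun i => vr (P i)) hw'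
    (fun p q => xb W (RF P Q S T p) (RF P Q S T q)) (fun i j => xb W (P i) (P j)) hcons
    (fun p q => if p.2.2.1 = true ∧ q.2.2.2 = true then sgn p.2.1 q.2.1 else 0) hcc hlb'
  exact halg

end increment

section iterate

lemma IsPartition_comp {ι κ : Type*} [Fintype ι] [Fintype κ] (e : κ ≃ ι) {P : ι → Set ℝ}
    (hP : IsPartition P) : IsPartition (P ∘ e) :=
  ⟨fun i => hP.1 _, fun i => hP.2.1 _, fun i j hij => hP.2.2.1 (e.injective.ne hij), by
    rw [← hP.2.2.2]
    exact e.surjective.iUnion_comp P⟩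

lemma En_comp (W : ℝ → ℝ → ℝ) {ι κ : Type*} [Fintype ι] [Fintype κ] (e : κ ≃ ι)
    (P : ι → Set ℝ) : En W (P ∘ e) = En W P := by
  rw [En, En]
  calc ∑ i : κ, ∑ j : κ, vr (P (e i)) * vr (P (e j)) * xb W (P (e i)) (P (e j)) ^ 2
      = ∑ i : κ, ∑ j : ι, vr (P (e i)) * vr (P j) * xb W (P (e i)) (P j) ^ 2 :=
        Finset.sum_congr rfl fun i _ =>
          Equiv.sum_comp e (fun j => vr (P (e i)) * vr (P j) * xb W (P (e i)) (P j) ^ 2)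
    _ = ∑ i : ι, ∑ j : ι, vr (P i) * vr (P j) * xb W (P i) (P j) ^ 2 :=
        Equiv.sum_comp e (fun i => ∑ j : ι, vr (P i) * vr (P j) * xb W (P i) (P j) ^ 2)

def GoodPart (W : ℝ → ℝ → ℝ) (ε : ℝ) {m : ℕ} (P : Fin m → Set ℝ) : Prop :=
  ∀ t : ℕ, t ≤ m → ∀ Q : Fin t → Set ℝ, IsPartition Q →
    ∀ S T : Fin t → Set ℝ,
      (∀ i, MeasurableSet (S i) ∧ MeasurableSet (T i) ∧ S i ⊆ Q i ∧ T i ⊆ Q i) →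
      (∑ i, ∑ j, |∫ x in S i, ∫ y in T j, (W x y - avgP P W x y)|) ≤ ε

lemma le_iterate (k a : ℕ) : a ≤ (fun n => 4 * n ^ 2)^[k] a := by
  induction k with
  | zero => simp
  | succ k ih =>
    rw [Function.iterate_succ_apply']
    refine ih.trans ?_
    show _ ≤ 4 * ((fun n => 4 * n ^ 2)^[k] a) ^ 2
    rcases Nat.eq_zero_or_pos ((fun n => 4 * n ^ 2)^[k] a) with h | h
    · simp [h]
    · calc (fun n => 4 * n ^ 2)^[k] a ≤ ((fun n => 4 * n ^ 2)^[k] a) ^ 2 :=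
          Nat.le_self_pow two_ne_zero _
        _ ≤ 4 * ((fun n => 4 * n ^ 2)^[k] a) ^ 2 := by omega

lemma iterate_mono (k : ℕ) {a b : ℕ} (h : a ≤ b) :
    (fun n => 4 * n ^ 2)^[k] a ≤ (fun n => 4 * n ^ 2)^[k] b := by
  induction k with
  | zero => simpa
  | succ k ih =>
    rw [Function.iterate_succ_apply', Function.iterate_succ_apply']
    show 4 * ((fun n => 4 * n ^ 2)^[k] a) ^ 2 ≤ 4 * ((fun n => 4 * n ^ 2)^[k] b) ^ 2
    have := Nat.pow_le_pow_left ih 2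
    omega

lemma iterate_one (k : ℕ) : (fun n => 4 * n ^ 2)^[k] 1 = 4 ^ (2 ^ k - 1) := by
  induction k with
  | zero => simp
  | succ k ih =>
    rw [Function.iterate_succ_apply', ih]
    show 4 * (4 ^ (2 ^ k - 1)) ^ 2 = _
    rw [← pow_mul, ← pow_succ']
    congr 1
    have h1 : 1 ≤ 2 ^ k := Nat.one_le_two_pow
    have h2 : 2 ^ (k + 1) = 2 * 2 ^ k := by rw [pow_succ]; ring
    omega

variable {W : ℝ → ℝ → ℝ}

lemma iter (hmeas : Measurable (Function.uncurry W)) (hb : ∀ x y, |W x y| ≤ 1)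
    (ε : ℝ) (hε : 0 < ε) (k : ℕ) :
    ∀ m : ℕ, 1 ≤ m → ∀ P : Fin m → Set ℝ, IsPartition P →
      (1:ℝ) ≤ En W P + k * ε ^ 2 →
      ∃ m' : ℕ, 1 ≤ m' ∧ m' ≤ (fun n => 4 * n ^ 2)^[k] m ∧
        ∃ P' : Fin m' → Set ℝ, IsPartition P' ∧ GoodPart W ε P' := by
  induction k with
  | zero =>
    intro m hm P hPp hen
    by_cases hg : GoodPart W ε P
    · exact ⟨m, hm, by simp, P, hPp, hg⟩
    exfalso
    rw [GoodPart] at hg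
    push_neg at hg
    obtain ⟨t, ht, Q, hQp, S, T, hSTcond, hgt⟩ := hg
    set sgn : Fin t → Fin t → ℝ := fun i j =>
      if 0 ≤ (∫ x in S i, ∫ y in T j, (W x y - avgP P W x y)) then 1 else -1 with hsgndef
    have hsgn : ∀ i j, |sgn i j| ≤ 1 := by
      intro i j; simp only [hsgndef]; split_ifs <;> simp
    have hlb : ε < ∑ i, ∑ j, sgn i j * ∫ x in S i, ∫ y in T j, (W x y - avgP P W x y) := by
      refine lt_of_lt_of_le hgt (le_of_eq ?_)
      refine Finset.sum_congr rfl fun i _ => Finset.sum_congr rfl fun j _ => ?_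
      simp only [hsgndef]
      split_ifs with h
      · rw [abs_of_nonneg h, one_mul]
      · rw [abs_of_neg (lt_of_not_ge h), neg_one_mul]
    have hinc := increment hmeas hb hPp hQp hSTcond sgn hsgn ε hε hlb
    have hle1 := En_le_one hmeas hb (RF_partition hPp hQp hSTcond)
    have hsq : 0 < ε ^ 2 := pow_pos hε 2
    simp only [Nat.cast_zero, zero_mul, add_zero] at hen
    linarith
  | succ k ih =>
    intro m hm P hPp hen
    by_cases hg : GoodPart W ε P
    · exact ⟨m, hm, le_iterate _ _, P, hPp, hg⟩
    rw [GoodPart] at hg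
    push_neg at hg
    obtain ⟨t, ht, Q, hQp, S, T, hSTcond, hgt⟩ := hg
    set sgn : Fin t → Fin t → ℝ := fun i j =>
      if 0 ≤ (∫ x in S i, ∫ y in T j, (W x y - avgP P W x y)) then 1 else -1 with hsgndef
    have hsgn : ∀ i j, |sgn i j| ≤ 1 := by
      intro i j; simp only [hsgndef]; split_ifs <;> simp
    have hlb : ε < ∑ i, ∑ j, sgn i j * ∫ x in S i, ∫ y in T j, (W x y - avgP P W x y) := by
      refine lt_of_lt_of_le hgt (le_of_eq ?_)
      refine Finset.sum_congr rfl fun i _ => Finset.sum_congr rfl fun j _ => ?_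
      simp only [hsgndef]
      split_ifs with h
      · rw [abs_of_nonneg h, one_mul]
      · rw [abs_of_neg (lt_of_not_ge h), neg_one_mul]
    have hinc := increment hmeas hb hPp hQp hSTcond sgn hsgn ε hε hlb
    have ht1 : 1 ≤ t := by
      by_contra h
      push_neg at h
      interval_cases t
      simp at hgt
      linarith
    -- reindex the refinement over Fin n
    set n := Fintype.card (Fin m × Fin t × Bool × Bool) with hndef
    have hncard : n = m * (t * (2 * 2)) := by
      rw [hndef, Fintype.card_prod, Fintype.card_prod, Fintype.card_prod,
        Fintype.card_fin, Fintype.card_fin, Fintype.card_bool]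
    set e : Fin n ≃ Fin m × Fin t × Bool × Bool := (Fintype.equivFin _).symm with hedef
    set P' : Fin n → Set ℝ := RF P Q S T ∘ e with hP'def
    have hP'p : IsPartition P' := IsPartition_comp e (RF_partition hPp hQp hSTcond)
    have hEn' : En W P' = En W (RF P Q S T) := En_comp W e _
    have hn1 : 1 ≤ n := by
      rw [hncard]
      have := Nat.mul_le_mul hm ht1
      nlinarith
    have hen' : (1:ℝ) ≤ En W P' + k * ε ^ 2 := by
      rw [hEn']
      push_cast at hen
      linarith
    obtain ⟨m', hm'1, hm'le, P'', hP''p, hgood⟩ := ih n hn1 P' hP'p hen'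
    refine ⟨m', hm'1, ?_, P'', hP''p, hgood⟩
    rw [Function.iterate_succ_apply]
    refine hm'le.trans (iterate_mono k ?_)
    show n ≤ 4 * m ^ 2
    rw [hncard]
    have h4 : m * (t * (2 * 2)) ≤ 4 * (m * m) := by
      have := Nat.mul_le_mul_left m ht
      nlinarith
    calc m * (t * (2 * 2)) ≤ 4 * (m * m) := h4
      _ = 4 * m ^ 2 := by ring

end iterate

lemma final_bound (ε : ℝ) (hε : 0 < ε) (m : ℕ)
    (hm : m ≤ 4 ^ (2 ^ (⌈1 / ε ^ 2⌉₊) - 1)) :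
    (m : ℝ) ≤ (16:ℝ) ^ ((2:ℝ) ^ ((1:ℝ) / ε ^ 2)) / 4 := by
  set K := ⌈1 / ε ^ 2⌉₊ with hKdef
  set a : ℝ := (2:ℝ) ^ ((1:ℝ) / ε ^ 2) with hadef
  have h2K : 1 ≤ 2 ^ K := Nat.one_le_two_pow
  have h1 : (m:ℝ) ≤ ((4 ^ (2 ^ K - 1) : ℕ) : ℝ) := Nat.cast_le.mpr hm
  have hcast : ((4 ^ (2 ^ K - 1) : ℕ) : ℝ) = (4:ℝ) ^ ((2:ℝ) ^ (K:ℝ) - 1) := by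
    push_cast [Nat.cast_sub h2K]
    rw [← Real.rpow_natCast (4:ℝ) (2^K - 1)]
    congr 1
    push_cast [Nat.cast_sub h2K]
    rw [← Real.rpow_natCast (2:ℝ) K]
  have hKle : (K:ℝ) ≤ 1 / ε ^ 2 + 1 :=
    (Nat.ceil_lt_add_one (by positivity)).le
  have hexp : (2:ℝ) ^ (K:ℝ) ≤ 2 * a := by
    have h2 : (2:ℝ) ^ ((1:ℝ) / ε ^ 2 + 1) = a * 2 := by
      rw [Real.rpow_add (by norm_num), Real.rpow_one, hadef]
    have h3 : (2:ℝ) ^ (K:ℝ) ≤ (2:ℝ) ^ ((1:ℝ) / ε ^ 2 + 1) :=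
      (Real.rpow_le_rpow_left_iff (by norm_num)).mpr hKle
    rw [h2] at h3
    linarith
  have hrhs : (16:ℝ) ^ a / 4 = (4:ℝ) ^ (2 * a - 1) := by
    have h16 : (16:ℝ) = (4:ℝ) ^ (2:ℝ) := by
      rw [show ((2:ℝ)) = ((2:ℕ):ℝ) by norm_num, Real.rpow_natCast]
      norm_num
    rw [h16, ← Real.rpow_mul (by norm_num), Real.rpow_sub (by norm_num), Real.rpow_one]
  rw [hcast] at h1
  refine h1.trans ?_
  rw [hrhs]
  refine (Real.rpow_le_rpow_left_iff (x := (4:ℝ)) (by norm_num)).mpr ?_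
  linarith

end IRG

theorem intermediate_regularity_graphon (ε : ℝ) (hε : 0 < ε) (W : ℝ → ℝ → ℝ)
    (hmeas : Measurable (Function.uncurry W))
    (hsymm : ∀ x y, W x y = W y x)
    (hrange : ∀ x y, W x y ∈ Set.Icc (0:ℝ) 1) :
    ∃ (m : ℕ) (P : Fin m → Set ℝ), IsPartition P ∧
      (m : ℝ) ≤ (16:ℝ) ^ ((2:ℝ) ^ (1 / ε ^ 2)) / 4 ∧
      ∀ (t : ℕ), t ≤ m → ∀ Q : Fin t → Set ℝ, IsPartition Q →
        cutPNorm Q (fun x y => W x y - avgP P W x y) ≤ ε := by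
  have hb : ∀ x y, |W x y| ≤ 1 := fun x y =>
    abs_le.mpr ⟨by linarith [(hrange x y).1], (hrange x y).2⟩
  set K := ⌈1 / ε ^ 2⌉₊ with hKdef
  -- initial partition
  set P0 : Fin 1 → Set ℝ := fun _ => I01 with hP0def
  have hP0 : IsPartition P0 :=
    ⟨fun _ => measurableSet_Icc, fun _ => subset_rfl,
      fun i j hij => absurd (Subsingleton.elim i j) hij, by
        rw [hP0def]; exact iUnion_const I01⟩
  have hen0 : (1:ℝ) ≤ IRG.En W P0 + K * ε ^ 2 := by
    have h1 : (1:ℝ) / ε ^ 2 ≤ K := Nat.le_ceil _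
    have h2 : (1:ℝ) ≤ K * ε ^ 2 := by
      have hsq : (0:ℝ) < ε ^ 2 := pow_pos hε 2
      calc (1:ℝ) = (1 / ε ^ 2) * ε ^ 2 := by field_simp
        _ ≤ K * ε ^ 2 := mul_le_mul_of_nonneg_right h1 hsq.le
    have := IRG.En_nonneg W P0
    linarith
  obtain ⟨m, hm1, hmle, P, hPp, hgood⟩ :=
    IRG.iter hmeas hb ε hε K 1 le_rfl P0 hP0 hen0
  rw [IRG.iterate_one] at hmle
  refine ⟨m, P, hPp, ?_, ?_⟩
  · exact IRG.final_bound ε hε m hmle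
  · intro t ht Q hQp
    refine Real.sSup_le ?_ hε.le
    rintro r ⟨S, T, hST, rfl⟩
    exact hgood t ht Q hQp S T hST
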